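/- Let G be a finite simple graph on vertex set V with maximum degree Δ, and let X = (X_1,…,X_k) be a partition of V. Suppose that for every vertex i with deg(i) ≥ 18k²·ln n and every part j, the number of neighbors of i in X_j lies in the interval [deg(i)/k − 5√(deg(i)·ln n), deg(i)/k + 5√(deg(i)·ln n)]. Then X is (18·max{√Δ, k²}·ln n)-envy-free, i.e., for every vertex i and every part j, E(i, X_j) − u_i(X) ≤ 18·max{√Δ, k²}·ln n, where u_i(X) is the number of neighbors of i in its own part. -/
import Mathlib


open Finset

/-- Number of neighbors of `i` inside the set `S`. -/
def nbrCount {V : Type*} [Fintype V] [DecidableEq V] (G : SimpleGraph V)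
    [DecidableRel G.Adj] (i : V) (S : Finset V) : ℕ :=
  (G.neighborFinset i ∩ S).card

theorem stmt_0 {V : Type*} [Fintype V] [DecidableEq V] (G : SimpleGraph V)
    [DecidableRel G.Adj] (n k Δ : ℕ) (hn : n = Fintype.card V) (hn2 : 2 ≤ n)
    (hk : 1 ≤ k) (hΔ : ∀ v : V, G.degree v ≤ Δ)
    (X : Fin k → Finset V)
    (hpart : ∀ v : V, ∃! j : Fin k, v ∈ X j)
    (hconc : ∀ i : V, ∀ j : Fin k,
      (18 : ℝ) * k ^ 2 * Real.log n ≤ G.degree i →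
      |(nbrCount G i (X j) : ℝ) - G.degree i / k| ≤
        5 * Real.sqrt (G.degree i * Real.log n)) :
    ∀ i : V, ∀ ji : Fin k, i ∈ X ji → ∀ j : Fin k,
      (nbrCount G i (X j) : ℝ) - nbrCount G i (X ji) ≤
        18 * max (Real.sqrt Δ) ((k : ℝ) ^ 2) * Real.log n := by
  intro i ji _ j
  have hlog : (0.6931471803 : ℝ) < Real.log n := by
    calc (0.6931471803 : ℝ) < Real.log 2 := Real.log_two_gt_d9
    _ ≤ Real.log n := Real.log_le_log (by norm_num) (by exact_mod_cast hn2)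
  have hlogpos : (0 : ℝ) < Real.log n := by linarith
  set d : ℝ := (G.degree i : ℝ) with hd
  have hdnn : (0 : ℝ) ≤ d := Nat.cast_nonneg _
  by_cases hcase : (18 : ℝ) * k ^ 2 * Real.log n ≤ d
  · have h1 := hconc i j hcase
    have h2 := hconc i ji hcase
    rw [abs_le] at h1 h2
    have hsq : Real.sqrt (d * Real.log n) = Real.sqrt d * Real.sqrt (Real.log n) :=
      Real.sqrt_mul hdnn _
    have hdΔ : Real.sqrt d ≤ Real.sqrt Δ :=
      Real.sqrt_le_sqrt (by rw [hd]; exact_mod_cast hΔ i)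
    have hln : Real.sqrt (Real.log n) ≤ (9 / 5) * Real.log n := by
      rw [show (9 / 5 : ℝ) * Real.log n = Real.sqrt (((9/5) * Real.log n) ^ 2) from
        (Real.sqrt_sq (by positivity)).symm]
      apply Real.sqrt_le_sqrt
      nlinarith [hlog]
    have hΔnn : (0 : ℝ) ≤ Real.sqrt Δ := Real.sqrt_nonneg _
    have key : (nbrCount G i (X j) : ℝ) - nbrCount G i (X ji)
        ≤ 10 * Real.sqrt (d * Real.log n) := by linarith [h1.2, h2.1]
    calc (nbrCount G i (X j) : ℝ) - nbrCount G i (X ji)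
        ≤ 10 * (Real.sqrt d * Real.sqrt (Real.log n)) := by rw [← hsq]; exact key
      _ ≤ 10 * (Real.sqrt Δ * ((9/5) * Real.log n)) := by
          apply mul_le_mul_of_nonneg_left _ (by norm_num)
          exact mul_le_mul hdΔ hln (Real.sqrt_nonneg _) hΔnn
      _ = 18 * Real.sqrt Δ * Real.log n := by ring
      _ ≤ 18 * max (Real.sqrt Δ) ((k : ℝ) ^ 2) * Real.log n := by
          apply mul_le_mul_of_nonneg_right _ hlogpos.le
          have := le_max_left (Real.sqrt (Δ : ℝ)) ((k : ℝ) ^ 2)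
          linarith
  · push_neg at hcase
    have hle : (nbrCount G i (X j) : ℝ) ≤ d := by
      exact_mod_cast Nat.cast_le.mpr (card_le_card (inter_subset_left ..))
    have h0 : (0 : ℝ) ≤ (nbrCount G i (X ji) : ℝ) := Nat.cast_nonneg _
    have hmax : (k : ℝ) ^ 2 ≤ max (Real.sqrt Δ) ((k : ℝ) ^ 2) := le_max_right _ _
    calc (nbrCount G i (X j) : ℝ) - nbrCount G i (X ji) ≤ d := by linarith
      _ ≤ 18 * k ^ 2 * Real.log n := hcase.le
      _ ≤ 18 * max (Real.sqrt Δ) ((k : ℝ) ^ 2) * Real.log n := by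
          apply mul_le_mul_of_nonneg_right _ hlogpos.le
          linarith
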